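/- For every finite simple graph G = (V,E) and interactions J : E → ℝ, h : V → ℝ, one has Z(G;J,h) = (∏_{v∈V} e^{h_v}) · Σ_{I} ∏_{w∈I} c_w, where the sum ranges over all independent sets I of the subdivision graph G′ of G, and the weight c_w equals A_{uv} := e^{J_{uv}} − 1 if w is the subdivision vertex corresponding to the edge uv ∈ E, and equals B_v := e^{−h_v} if w is an original vertex v ∈ V. In other words, Z(G;J,h) equals (∏_v e^{h_v}) times the multivariate independence polynomial of the bipartite graph G′ evaluated at the weights (A,B). -/

import Mathlib

open scoped Classical

/-- Multivariate independence polynomial of `G`: sum over independent sets `I`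
of `∏ v ∈ I, X v`. -/
noncomputable def indepPoly {V : Type} [Fintype V] (G : SimpleGraph V) :
    MvPolynomial V ℝ :=
  ∑ I ∈ Finset.univ.filter (fun I : Finset V => ∀ u ∈ I, ∀ v ∈ I, ¬ G.Adj u v),
    ∏ v ∈ I, MvPolynomial.X v

/-- A permutation voltage assignment on `G` with values in `S_M`:
`α u v = (α v u)⁻¹` on directed edges, and (as a normalization) `α u v = 1`
on non-adjacent pairs. -/
def IsVoltage {V : Type} (G : SimpleGraph V) (M : ℕ)
    (α : V → V → Equiv.Perm (Fin M)) : Prop :=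
  (∀ u v, G.Adj u v → α v u = (α u v)⁻¹) ∧ (∀ u v, ¬ G.Adj u v → α u v = 1)

/-- The `M`-cover of `G` determined by a voltage assignment `α`:
`(u,k)` is adjacent to `(v,l)` exactly when `u ~ v` in `G` and `l = α u v k`. -/
def cover {V : Type} (G : SimpleGraph V) (M : ℕ)
    (α : V → V → Equiv.Perm (Fin M)) : SimpleGraph (V × Fin M) :=
  SimpleGraph.fromRel (fun p q => G.Adj p.1 q.1 ∧ q.2 = α p.1 q.1 p.2)

/-- Partition function of the binary pairwise model on `G` with interactions `J, h`. -/
noncomputable def partitionZ {V : Type} [Fintype V] (G : SimpleGraph V)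
    (J : Sym2 V → ℝ) (h : V → ℝ) : ℝ :=
  ∑ s : V → Bool, Real.exp
    ((∑ e ∈ G.edgeFinset,
        J e * Sym2.lift ⟨fun u v => (if s u then (1:ℝ) else 0) * (if s v then (1:ℝ) else 0),
          fun u v => by ring⟩ e)
      + ∑ v, h v * (if s v then (1:ℝ) else 0))

/-- The subdivision graph `G'` of `G`: vertices `V ⊔ E`, with `v ∈ V` adjacent to
`e ∈ E` exactly when `v` is an endpoint of `e`. -/
def subdivision {V : Type} (G : SimpleGraph V) : SimpleGraph (V ⊕ G.edgeSet) :=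
  SimpleGraph.fromRel (fun a b =>
    ∃ (v : V) (e : G.edgeSet), a = Sum.inl v ∧ b = Sum.inr e ∧ v ∈ (e : Sym2 V))

lemma sigma_eq {V : Type} (s : V → Bool) (e : Sym2 V) :
    Sym2.lift ⟨fun u v => (if s u then (1:ℝ) else 0) * (if s v then (1:ℝ) else 0),
      fun u v => by ring⟩ e = if (∀ v ∈ e, s v = true) then (1:ℝ) else 0 := by
  induction e using Sym2.ind with
  | _ u v =>
    rw [Sym2.lift_mk]
    by_cases hu : s u = true <;> by_cases hv : s v = true <;>
      simp [Sym2.mem_iff, hu, hv]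

lemma config_eq {V : Type} [Fintype V] (G : SimpleGraph V) (J : Sym2 V → ℝ) (h : V → ℝ)
    (s : V → Bool) :
    Real.exp ((∑ e ∈ G.edgeFinset,
        J e * Sym2.lift ⟨fun u v => (if s u then (1:ℝ) else 0) * (if s v then (1:ℝ) else 0),
          fun u v => by ring⟩ e)
      + ∑ v, h v * (if s v then (1:ℝ) else 0))
    = (∏ v, Real.exp (h v)) *
      ∑ F ∈ G.edgeFinset.powerset,
        (if ∀ e ∈ F, ∀ v ∈ e, s v = true then
          (∏ e ∈ F, (Real.exp (J e) - 1)) * ∏ v, (if s v then (1:ℝ) else Real.exp (-h v))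
        else 0) := by
  have hedge : (∏ e ∈ G.edgeFinset, Real.exp (J e *
        Sym2.lift ⟨fun u v => (if s u then (1:ℝ) else 0) * (if s v then (1:ℝ) else 0),
          fun u v => by ring⟩ e))
      = ∑ F ∈ G.edgeFinset.powerset,
          (∏ e ∈ F, (Real.exp (J e) - 1)) *
            (if ∀ e ∈ F, ∀ v ∈ e, s v = true then (1:ℝ) else 0) := by
    have hterm : ∀ e ∈ G.edgeFinset, Real.exp (J e *
        Sym2.lift ⟨fun u v => (if s u then (1:ℝ) else 0) * (if s v then (1:ℝ) else 0),
          fun u v => by ring⟩ e)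
        = (Real.exp (J e) - 1) * (if ∀ v ∈ e, s v = true then (1:ℝ) else 0) + 1 := by
      intro e _
      rw [sigma_eq]
      by_cases hc : ∀ v ∈ e, s v = true
      · rw [if_pos hc, if_pos hc, mul_one, mul_one]; ring
      · rw [if_neg hc, if_neg hc, mul_zero, mul_zero, zero_add, Real.exp_zero]
    rw [Finset.prod_congr rfl hterm, Finset.prod_add]
    refine Finset.sum_congr rfl fun F hF => ?_
    rw [Finset.prod_const_one, mul_one, Finset.prod_mul_distrib, Finset.prod_boole]
    congr 1
    rcases em (∀ e ∈ F, ∀ v ∈ e, s v = true) with hc | hc <;> simp [hc]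
  have hvert : (∏ v, Real.exp (h v * (if s v then (1:ℝ) else 0)))
      = (∏ v, Real.exp (h v)) * ∏ v, (if s v then (1:ℝ) else Real.exp (-h v)) := by
    rw [← Finset.prod_mul_distrib]
    refine Finset.prod_congr rfl fun v _ => ?_
    by_cases hv : s v = true
    · simp [hv]
    · rw [if_neg hv, if_neg hv, mul_zero, Real.exp_zero, ← Real.exp_add, add_neg_cancel,
        Real.exp_zero]
  rw [Real.exp_add, Real.exp_sum, Real.exp_sum, hedge, hvert, Finset.sum_mul, Finset.mul_sum]
  refine Finset.sum_congr rfl fun F hF => ?_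
  by_cases hc : ∀ e ∈ F, ∀ v ∈ e, s v = true
  · rw [if_pos hc, if_pos hc]; ring
  · rw [if_neg hc, if_neg hc]; ring

lemma subdiv_adj_lr {V : Type} (G : SimpleGraph V) (v : V) (e : G.edgeSet) :
    (subdivision G).Adj (Sum.inl v) (Sum.inr e) ↔ v ∈ (e : Sym2 V) := by
  simp [subdivision]

lemma subdiv_not_adj_ll {V : Type} (G : SimpleGraph V) (u v : V) :
    ¬ (subdivision G).Adj (Sum.inl u) (Sum.inl v) := by
  simp [subdivision]

lemma subdiv_not_adj_rr {V : Type} (G : SimpleGraph V) (e f : G.edgeSet) :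
    ¬ (subdivision G).Adj (Sum.inr e) (Sum.inr f) := by
  simp [subdivision]

lemma subdiv_adj_rl {V : Type} (G : SimpleGraph V) (v : V) (e : G.edgeSet) :
    (subdivision G).Adj (Sum.inr e) (Sum.inl v) ↔ v ∈ (e : Sym2 V) := by
  simp [subdivision]


/-- the partition function equals `∏_v e^{h_v}` times the independence
polynomial of the subdivision graph `G'` evaluated at the weights
`A_e = e^{J_e} - 1` (subdivision vertices) and `B_v = e^{-h_v}` (original vertices). -/
theorem stmt3 {V : Type} [Fintype V] (G : SimpleGraph V)
    (J : Sym2 V → ℝ) (h : V → ℝ) :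
    partitionZ G J h
      = (∏ v, Real.exp (h v)) *
        ∑ I ∈ Finset.univ.filter
            (fun I : Finset (V ⊕ G.edgeSet) =>
              ∀ a ∈ I, ∀ b ∈ I, ¬ (subdivision G).Adj a b),
          ∏ w ∈ I,
            Sum.elim (fun v => Real.exp (-h v))
              (fun e : G.edgeSet => Real.exp (J e.val) - 1) w := by
  unfold partitionZ
  rw [Finset.sum_congr rfl fun s _ => config_eq G J h s, ← Finset.mul_sum]
  congr 1
  rw [← Finset.sum_product']
  rw [← Finset.sum_filter
    (fun x : (V → Bool) × Finset (Sym2 V) => ∀ e ∈ x.2, ∀ v ∈ e, x.1 v = true)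
    (fun x : (V → Bool) × Finset (Sym2 V) =>
      (∏ e ∈ x.2, (Real.exp (J e) - 1)) * ∏ v, (if x.1 v then (1:ℝ) else Real.exp (-h v)))]
  refine Finset.sum_nbij'
    (i := fun x : (V → Bool) × Finset (Sym2 V) =>
      (Finset.univ.filter fun v => x.1 v = false).disjSum
        (x.2.subtype fun e => e ∈ G.edgeSet))
    (j := fun I : Finset (V ⊕ G.edgeSet) =>
      (fun v => if Sum.inl v ∈ I then false else true,
        I.toRight.map (Function.Embedding.subtype fun e => e ∈ G.edgeSet)))
    ?_ ?_ ?_ ?_ ?_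
  · -- maps into independent sets
    rintro ⟨s, F⟩ hx
    rw [Finset.mem_filter] at hx ⊢
    obtain ⟨hmem, hcond⟩ := hx
    rw [Finset.mem_product, Finset.mem_powerset] at hmem
    refine ⟨Finset.mem_univ _, ?_⟩
    intro a ha b hb
    rw [Finset.mem_disjSum] at ha hb
    rcases ha with ⟨v, hv, rfl⟩ | ⟨e, he, rfl⟩ <;>
      rcases hb with ⟨w, hw, rfl⟩ | ⟨f, hf, rfl⟩
    · exact subdiv_not_adj_ll G v w
    · rw [subdiv_adj_lr]
      intro hvf
      rw [Finset.mem_subtype] at hf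
      rw [Finset.mem_filter] at hv
      have := hcond _ hf _ hvf
      rw [hv.2] at this
      exact Bool.false_ne_true this
    · rw [subdiv_adj_rl]
      intro hwe
      rw [Finset.mem_subtype] at he
      rw [Finset.mem_filter] at hw
      have := hcond _ he _ hwe
      rw [hw.2] at this
      exact Bool.false_ne_true this
    · exact subdiv_not_adj_rr G e f
  · -- inverse maps into pairs
    intro I hI
    rw [Finset.mem_filter] at hI
    obtain ⟨-, hind⟩ := hI
    rw [Finset.mem_filter, Finset.mem_product, Finset.mem_powerset]
    refine ⟨⟨Finset.mem_univ _, ?_⟩, ?_⟩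
    · intro a ha
      rw [Finset.mem_map] at ha
      obtain ⟨e, he, rfl⟩ := ha
      exact SimpleGraph.mem_edgeFinset.2 e.2
    · intro a ha v hva
      rw [Finset.mem_map] at ha
      obtain ⟨e, he, rfl⟩ := ha
      rw [Finset.mem_toRight] at he
      by_cases hmem : Sum.inl v ∈ I
      · exact absurd ((subdiv_adj_lr G v e).2 hva) (hind _ hmem _ he)
      · simp [hmem]
  · -- left inverse
    rintro ⟨s, F⟩ hx
    rw [Finset.mem_filter, Finset.mem_product, Finset.mem_powerset] at hx
    have hsub : ∀ e ∈ F, e ∈ G.edgeSet := fun e he => SimpleGraph.mem_edgeFinset.1 (hx.1.2 he)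
    refine Prod.ext ?_ ?_
    · funext v
      by_cases hv : s v = true <;>
        simp [Finset.mem_disjSum, Finset.mem_filter, hv]
    · simp only [Finset.toRight_disjSum, Finset.subtype_map]
      exact Finset.filter_true_of_mem hsub
  · -- right inverse
    intro I hI
    simp only
    have h1 : (Finset.univ.filter fun v =>
        (if Sum.inl v ∈ I then false else true) = false) = I.toLeft := by
      ext v
      rw [Finset.mem_filter, Finset.mem_toLeft]
      by_cases hmem : Sum.inl v ∈ I <;> simp [hmem]
    have h2 : ((I.toRight.map (Function.Embedding.subtype fun e => e ∈ G.edgeSet)).subtype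
        fun e => e ∈ G.edgeSet) = I.toRight := by
      ext e
      rw [Finset.mem_subtype, Finset.mem_map]
      constructor
      · rintro ⟨f, hf, hfe⟩
        rwa [show f = e from Subtype.ext hfe] at hf
      · intro he
        exact ⟨e, he, rfl⟩
    rw [h1, h2, Finset.toLeft_disjSum_toRight]
  · -- values agree
    rintro ⟨s, F⟩ hx
    rw [Finset.mem_filter, Finset.mem_product, Finset.mem_powerset] at hx
    have hsub : ∀ e ∈ F, e ∈ G.edgeSet := fun e he => SimpleGraph.mem_edgeFinset.1 (hx.1.2 he)
    rw [Finset.prod_disjSum]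
    have hA : (∏ e ∈ F.subtype (fun e => e ∈ G.edgeSet),
        Sum.elim (fun v => Real.exp (-h v))
          (fun e : G.edgeSet => Real.exp (J e.val) - 1) (Sum.inr e))
        = ∏ e ∈ F, (Real.exp (J e) - 1) := by
      simp only [Sum.elim_inr]
      conv_rhs => rw [← Finset.filter_true_of_mem hsub, ← Finset.subtype_map,
        Finset.prod_map]
      rfl
    have hB : (∏ v ∈ Finset.univ.filter fun v => s v = false,
        Sum.elim (fun v => Real.exp (-h v))
          (fun e : G.edgeSet => Real.exp (J e.val) - 1) (Sum.inl v))
        = ∏ v, (if s v then (1:ℝ) else Real.exp (-h v)) := by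
      simp only [Sum.elim_inl]
      rw [Finset.prod_filter]
      refine Finset.prod_congr rfl fun v _ => ?_
      by_cases hv : s v = true <;> simp [hv]
    rw [hA, hB, mul_comm]
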